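/- arXiv:2506.14108 — 4 statements merged into one kernel-verified Lean document; each statement's English description precedes it below -/
import Mathlib

section
/- Let LD(β₁),…,LD(β_b) be real numbers (the sample β-local depth values) and define ILD(β_i) = (1/i)·Σ_{j=1}^{i} LD(β_j) (the uniformly-weighted β-integrated local depth). If Δ = max_{1<i≤b} |LD(β_i) − LD(β_{i−1})| is the maximum jump between successive local depth values, then max_{1<i≤b} |ILD(β_i) − ILD(β_{i−1})| ≤ Δ/2. -/
lemma gauss_icc (n : ℕ) : ∑ j ∈ Finset.Icc 1 n, (j : ℝ) = n * (n + 1) / 2 := by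
  induction n with
  | zero => simp
  | succ m ih =>
      rw [Finset.sum_Icc_succ_top (by omega), ih]
      push_cast; ring

/-- Proposition 1, first inequality: the maximal jump between successive
uniformly-weighted integrated local depth values is at most half the maximal
jump between successive local depth values. -/
theorem ild_adjacent_jump_le_half (b : ℕ) (hb : 2 ≤ b) (LD : ℕ → ℝ) (Δ : ℝ)
    (ILD : ℕ → ℝ)
    (hILD : ∀ i, 1 ≤ i → ILD i = (∑ j ∈ Finset.Icc 1 i, LD j) / i)
    (hΔ : ∀ i, 2 ≤ i → i ≤ b → |LD i - LD (i - 1)| ≤ Δ) :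
    ∀ i, 2 ≤ i → i ≤ b → |ILD i - ILD (i - 1)| ≤ Δ / 2 := by
  have hΔ0 : 0 ≤ Δ := le_trans (abs_nonneg _) (hΔ 2 le_rfl hb)
  intro i hi hib
  obtain ⟨n, rfl⟩ : ∃ n, i = n + 1 := ⟨i - 1, by omega⟩
  have hn : 1 ≤ n := by omega
  simp only [Nat.add_sub_cancel]
  -- telescoping bound on gaps
  have tele : ∀ k, k ≤ n + 1 → ∀ j, 1 ≤ j → j ≤ k →
      |LD k - LD j| ≤ ((k - j : ℕ) : ℝ) * Δ := by
    intro k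
    induction k with
    | zero => intro _ j hj1 hj; omega
    | succ m ih =>
        intro hm j hj1 hjm
        rcases Nat.lt_or_ge m j with h | h
        · have : j = m + 1 := by omega
          subst this; simp
        · have h1 := ih (by omega) j hj1 h
          have h2 := hΔ (m + 1) (by omega) (by omega)
          simp only [Nat.add_sub_cancel] at h2
          have heq : LD (m + 1) - LD j = (LD (m + 1) - LD m) + (LD m - LD j) := by ring
          have hcast : ((m + 1 - j : ℕ) : ℝ) = ((m - j : ℕ) : ℝ) + 1 := by
            rw [Nat.succ_sub h]; push_cast; ring
          calc |LD (m + 1) - LD j| ≤ |LD (m + 1) - LD m| + |LD m - LD j| := by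
                rw [heq]; exact abs_add_le _ _
            _ ≤ Δ + ((m - j : ℕ) : ℝ) * Δ := add_le_add h2 h1
            _ = ((m + 1 - j : ℕ) : ℝ) * Δ := by rw [hcast]; ring
  -- sum bound
  have hsum : |∑ j ∈ Finset.Icc 1 n, (LD (n + 1) - LD j)|
      ≤ n * (n + 1) / 2 * Δ := by
    calc |∑ j ∈ Finset.Icc 1 n, (LD (n + 1) - LD j)|
        ≤ ∑ j ∈ Finset.Icc 1 n, |LD (n + 1) - LD j| :=
          Finset.abs_sum_le_sum_abs _ _
      _ ≤ ∑ j ∈ Finset.Icc 1 n, ((n + 1 - j : ℕ) : ℝ) * Δ := by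
          refine Finset.sum_le_sum fun j hj => ?_
          simp only [Finset.mem_Icc] at hj
          exact tele (n + 1) le_rfl j hj.1 (by omega)
      _ = (∑ j ∈ Finset.Icc 1 n, ((n + 1 - j : ℕ) : ℝ)) * Δ := by
          rw [Finset.sum_mul]
      _ = (∑ j ∈ Finset.Icc 1 n, (j : ℝ)) * Δ := by
          congr 1
          refine Finset.sum_nbij' (fun j => n + 1 - j) (fun j => n + 1 - j)
            ?_ ?_ ?_ ?_ ?_ <;> intro j hj <;>
            simp only [Finset.mem_Icc] at * <;> first | omega | (congr 1; omega)
      _ = n * (n + 1) / 2 * Δ := by rw [gauss_icc]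
  -- express the ILD difference
  have hdiff : ILD (n + 1) - ILD n
      = (∑ j ∈ Finset.Icc 1 n, (LD (n + 1) - LD j)) / ((n + 1) * n) := by
    rw [hILD (n + 1) (by omega), hILD n hn,
      Finset.sum_Icc_succ_top (show 1 ≤ n + 1 by omega)]
    have hcard : ∑ j ∈ Finset.Icc 1 n, (LD (n + 1) - LD j)
        = n * LD (n + 1) - ∑ j ∈ Finset.Icc 1 n, LD j := by
      rw [Finset.sum_sub_distrib, Finset.sum_const, Nat.card_Icc]
      simp
    rw [hcard]
    have h1 : ((n : ℝ)) ≠ 0 := by positivity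
    have h2 : ((n : ℝ) + 1) ≠ 0 := by positivity
    field_simp
    push_cast
    ring
  rw [hdiff, abs_div]
  have hpos : (0:ℝ) < (n + 1) * n := by positivity
  rw [abs_of_pos hpos]
  rw [div_le_div_iff₀ hpos (by norm_num)]
  calc |∑ j ∈ Finset.Icc 1 n, (LD (n + 1) - LD j)| * 2
      ≤ n * (n + 1) / 2 * Δ * 2 := by nlinarith [abs_nonneg (∑ j ∈ Finset.Icc 1 n, (LD (n + 1) - LD j))]
    _ = Δ * ((n + 1) * n) := by ring
end

section
/- Let P be a probability measure on ℝ^d with D(x | P) → 0 as ‖x‖ → ∞, where D is halfspace depth. Then for every fixed β ∈ (0,1], the local depth LD^β(x | P) = D(x | P restricted to a measurable set R_x with P(R_x) ≥ β and renormalized) also tends to 0 as ‖x‖ → ∞. -/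
open MeasureTheory ENNReal Filter

/-- Halfspace (Tukey) depth of `x` with respect to `Q`. -/
noncomputable def halfspaceDepth {d : ℕ} (Q : Measure (EuclideanSpace ℝ (Fin d)))
    (x : EuclideanSpace ℝ (Fin d)) : ℝ≥0∞ :=
  ⨅ (u : EuclideanSpace ℝ (Fin d)) (_ : u ≠ 0),
    Q {z | inner ℝ u z ≤ (inner ℝ u x : ℝ)}

lemma local_le_global {d : ℕ}
    (P : Measure (EuclideanSpace ℝ (Fin d)))
    (β : ℝ≥0∞) (hβ0 : 0 < β) (hβt : β ≠ ⊤)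
    (S : Set (EuclideanSpace ℝ (Fin d))) (hS : MeasurableSet S) (hSβ : β ≤ P S)
    (x : EuclideanSpace ℝ (Fin d)) :
    halfspaceDepth ((P S)⁻¹ • P.restrict S) x ≤ β⁻¹ * halfspaceDepth P x := by
  unfold halfspaceDepth
  rw [ENNReal.mul_iInf_of_ne (by simp [hβt]) (by simpa using hβ0.ne')]
  refine iInf_mono fun u => ?_
  rw [ENNReal.mul_iInf_of_ne (by simp [hβt]) (by simpa using hβ0.ne')]
  refine iInf_mono fun hu => ?_
  have hmeas : MeasurableSet {z : EuclideanSpace ℝ (Fin d) | inner ℝ u z ≤ (inner ℝ u x : ℝ)} := by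
    have : Continuous fun z : EuclideanSpace ℝ (Fin d) => (inner ℝ u z : ℝ) :=
      continuous_const.inner continuous_id
    exact measurableSet_le this.measurable measurable_const
  rw [Measure.smul_apply, smul_eq_mul, Measure.restrict_apply hmeas]
  calc (P S)⁻¹ * P ({z | inner ℝ u z ≤ (inner ℝ u x : ℝ)} ∩ S)
      ≤ β⁻¹ * P {z | inner ℝ u z ≤ (inner ℝ u x : ℝ)} := by
        gcongr
        all_goals first
          | exact Set.inter_subset_left
          | exact ENNReal.inv_le_inv.2 hSβ

/-- If the global halfspace depth vanishes at infinity, then so does the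
`β`-local halfspace depth, computed with respect to `P` conditioned on regions
`R x` of `P`-mass at least `β`. -/
theorem local_halfspaceDepth_vanishes_at_infinity {d : ℕ}
    (P : Measure (EuclideanSpace ℝ (Fin d))) [IsProbabilityMeasure P]
    (hP : Tendsto (fun x => halfspaceDepth P x)
      (Filter.comap (fun x : EuclideanSpace ℝ (Fin d) => ‖x‖) atTop) (nhds 0))
    (β : ℝ≥0∞) (hβ0 : 0 < β) (hβ1 : β ≤ 1)
    (R : EuclideanSpace ℝ (Fin d) → Set (EuclideanSpace ℝ (Fin d)))
    (hRmeas : ∀ x, MeasurableSet (R x)) (hRβ : ∀ x, β ≤ P (R x)) :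
    Tendsto (fun x => halfspaceDepth ((P (R x))⁻¹ • P.restrict (R x)) x)
      (Filter.comap (fun x : EuclideanSpace ℝ (Fin d) => ‖x‖) atTop) (nhds 0) := by
  have hβinv : β⁻¹ ≠ ⊤ := by simpa using hβ0.ne'
  have hupper : Tendsto (fun x => β⁻¹ * halfspaceDepth P x)
      (Filter.comap (fun x : EuclideanSpace ℝ (Fin d) => ‖x‖) atTop) (nhds 0) := by
    have := ENNReal.Tendsto.const_mul hP (Or.inr hβinv)
    simpa using this
  refine tendsto_of_tendsto_of_tendsto_of_le_of_le tendsto_const_nhds hupper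
    (fun x => zero_le) (fun x => local_le_global P β hβ0 (lt_of_le_of_lt hβ1 one_lt_top).ne (R x) (hRmeas x) (hRβ x) x)
end

section
/- Let h : ℝ^d × ℝ^d → [0,∞) be measurable with the property that for P-almost every y, h(y,x) → ∞ as ‖x‖ → ∞. Let P be a probability measure on ℝ^d, fix β ∈ (0,1], and for each x let R_x be a measurable set with P(R_x) ≥ β. Define the local Type B depth LD^β(x) = 1/(1 + E_{y∼P_{R_x}}[h(y,x)]), where P_{R_x} is P restricted to R_x and renormalized. Then LD^β(x) → 0 as ‖x‖ → ∞. -/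
open MeasureTheory ENNReal Filter

/-- The local Type B depth `1/(1 + E_{P_{R_x}}[h(y,x)])` vanishes at infinity,
provided `h(y,·)` tends to infinity for `P`-almost every `y` and the
conditioning regions `R x` all carry `P`-mass at least `β > 0`. -/
theorem local_typeB_depth_vanishes_at_infinity {d : ℕ}
    (P : Measure (EuclideanSpace ℝ (Fin d))) [IsProbabilityMeasure P]
    (h : EuclideanSpace ℝ (Fin d) → EuclideanSpace ℝ (Fin d) → ℝ≥0∞)
    (hmeas : Measurable fun p : EuclideanSpace ℝ (Fin d) × EuclideanSpace ℝ (Fin d) =>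
      h p.1 p.2)
    (htends : ∀ᵐ y ∂P, Tendsto (fun x => h y x)
      (Filter.comap (fun x : EuclideanSpace ℝ (Fin d) => ‖x‖) atTop) (nhds ⊤))
    (β : ℝ≥0∞) (hβ0 : 0 < β) (hβ1 : β ≤ 1)
    (R : EuclideanSpace ℝ (Fin d) → Set (EuclideanSpace ℝ (Fin d)))
    (hRmeas : ∀ x, MeasurableSet (R x)) (hRβ : ∀ x, β ≤ P (R x)) :
    Tendsto (fun x => (1 + ∫⁻ y, h y x ∂((P (R x))⁻¹ • P.restrict (R x)))⁻¹)
      (Filter.comap (fun x : EuclideanSpace ℝ (Fin d) => ‖x‖) atTop) (nhds 0) := by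
  set l := Filter.comap (fun x : EuclideanSpace ℝ (Fin d) => ‖x‖) atTop with hl
  have hβtop : β ≠ ⊤ := (lt_of_le_of_lt hβ1 one_lt_top).ne
  have hβ2 : (0 : ℝ≥0∞) < β / 2 := ENNReal.div_pos hβ0.ne' (by norm_num)
  have hβ2top : β / 2 ≠ ⊤ := by
    exact (ENNReal.div_lt_top hβtop (by norm_num)).ne
  have hmx : ∀ x, Measurable fun y => h y x := fun x =>
    hmeas.comp (measurable_id.prodMk measurable_const)
  -- the inner integral tends to ⊤
  have hI : Tendsto (fun x => ∫⁻ y, h y x ∂((P (R x))⁻¹ • P.restrict (R x))) l (nhds ⊤) := by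
    rw [ENNReal.tendsto_nhds_top_iff_nat]
    intro n
    set C : ℝ≥0∞ := ((n : ℝ≥0∞) + 1) / (β / 2) with hC
    have hCtop : C < ⊤ := ENNReal.div_lt_top (by simp) hβ2.ne'
    have hCmul : C * (β / 2) = (n : ℝ≥0∞) + 1 := ENNReal.div_mul_cancel hβ2.ne' hβ2top
    -- measure of the "small h" set tends to 0
    have hsmall : Tendsto (fun x => P {y | h y x < C}) l (nhds 0) := by
      rw [tendsto_iff_seq_tendsto]
      intro u hu
      have key : ∀ᵐ y ∂P, Tendsto (fun k =>
          Set.indicator {y' | h y' (u k) < C} (fun _ => (1 : ℝ≥0∞)) y) atTop (nhds 0) := by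
        filter_upwards [htends] with y hy
        have : ∀ᶠ k in atTop, C < h y (u k) := (hy.comp hu) (Ioi_mem_nhds hCtop)
        refine tendsto_const_nhds.congr' ?_
        filter_upwards [this] with k hk
        simp [Set.indicator_of_notMem, hk.not_gt]
      have hconv := MeasureTheory.tendsto_lintegral_of_dominated_convergence
          (F := fun k y => Set.indicator {y' | h y' (u k) < C} (fun _ => (1 : ℝ≥0∞)) y)
          (f := fun _ => 0) (bound := fun _ => 1)
          (fun k => (measurable_const.indicator
            (measurableSet_lt (hmx (u k)) measurable_const)))
          (fun k => Filter.Eventually.of_forall fun y => Set.indicator_le_self' (by simp) y)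
          (by simp) key
      simp only [lintegral_zero] at hconv
      refine hconv.congr fun k => ?_
      rw [lintegral_indicator (measurableSet_lt (hmx (u k)) measurable_const)]
      simp
    have hev : ∀ᶠ x in l, P {y | h y x < C} < β / 2 :=
      hsmall.eventually_lt_const hβ2
    filter_upwards [hev] with x hx
    set A : Set (EuclideanSpace ℝ (Fin d)) := {y | C ≤ h y x} with hA
    have hAmeas : MeasurableSet A := measurableSet_le measurable_const (hmx x)
    have hRA : β / 2 ≤ P (R x ∩ A) := by
      have h1 : P (R x) ≤ P (R x ∩ A) + P (R x \ A) := measure_le_inter_add_diff P (R x) A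
      have h2 : P (R x \ A) ≤ β / 2 := by
        refine le_trans (measure_mono ?_) hx.le
        intro y hy
        exact not_le.mp (by simpa [A] using hy.2)
      have h3 : β ≤ P (R x ∩ A) + β / 2 :=
        le_trans (hRβ x) (le_trans h1 (add_le_add_right h2 _))
      have h4 : β - β / 2 ≤ P (R x ∩ A) := tsub_le_iff_right.mpr h3
      rwa [ENNReal.sub_half hβtop] at h4
    have hP1 : (1 : ℝ≥0∞) ≤ (P (R x))⁻¹ :=
      ENNReal.one_le_inv.mpr prob_le_one
    calc (n : ℝ≥0∞) < (n : ℝ≥0∞) + 1 := by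
          exact ENNReal.lt_add_right (by simp) one_ne_zero
      _ = C * (β / 2) := hCmul.symm
      _ ≤ C * P (R x ∩ A) := mul_le_mul_right hRA C
      _ = ∫⁻ _ in R x ∩ A, C ∂P := by
          rw [setLIntegral_const, mul_comm]
      _ ≤ ∫⁻ y in R x ∩ A, h y x ∂P := by
          refine setLIntegral_mono (hmx x) fun y hy => hy.2
      _ ≤ ∫⁻ y in R x, h y x ∂P :=
          lintegral_mono_set Set.inter_subset_left
      _ = 1 * ∫⁻ y in R x, h y x ∂P := (one_mul _).symm
      _ ≤ (P (R x))⁻¹ * ∫⁻ y in R x, h y x ∂P := mul_le_mul_left hP1 _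
      _ = ∫⁻ y, h y x ∂((P (R x))⁻¹ • P.restrict (R x)) :=
          by rw [lintegral_smul_measure, smul_eq_mul]
  have h1 : Tendsto (fun x => 1 + ∫⁻ y, h y x ∂((P (R x))⁻¹ • P.restrict (R x))) l
      (nhds ⊤) := by
    have := (tendsto_const_nhds (x := (1 : ℝ≥0∞)) (f := l)).add hI
    simpa using this
  have : Tendsto (fun x => (1 + ∫⁻ y, h y x ∂((P (R x))⁻¹ • P.restrict (R x)))⁻¹) l
      (nhds (⊤ : ℝ≥0∞)⁻¹) := ENNReal.tendsto_inv_iff.2 h1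
  simpa using this
end

section
/- Let P be an absolutely continuous probability measure on ℝ^d such that its spatial depth vanishes at infinity, i.e., ‖E_{y∼P}[(y−x)/‖y−x‖]‖ → 1 as ‖x‖ → ∞. Fix β ∈ (0,1] and for each x let R_x be measurable with P(R_x) = β. Then the local spatial depth LD^β(x) = 1 − ‖E_{y∼P_{R_x}}[(y−x)/‖y−x‖]‖ also tends to 0 as ‖x‖ → ∞. -/
open MeasureTheory ENNReal Filter

/-- If the (global) spatial depth of an absolutely continuous probability
measure vanishes at infinity, then so does the local spatial depth computed
from conditioning regions of mass exactly `β`. -/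
theorem local_spatial_depth_vanishes_at_infinity {d : ℕ}
    (P : Measure (EuclideanSpace ℝ (Fin d))) [IsProbabilityMeasure P]
    (hac : P ≪ volume)
    (hglobal : Tendsto (fun x => ‖∫ y, ‖y - x‖⁻¹ • (y - x) ∂P‖)
      (Filter.comap (fun x : EuclideanSpace ℝ (Fin d) => ‖x‖) atTop) (nhds 1))
    (β : ℝ) (hβ0 : 0 < β) (hβ1 : β ≤ 1)
    (R : EuclideanSpace ℝ (Fin d) → Set (EuclideanSpace ℝ (Fin d)))
    (hRmeas : ∀ x, MeasurableSet (R x))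
    (hRβ : ∀ x, (P (R x)).toReal = β) :
    Tendsto
      (fun x => 1 - ‖∫ y, ‖y - x‖⁻¹ • (y - x) ∂((P (R x))⁻¹ • P.restrict (R x))‖)
      (Filter.comap (fun x : EuclideanSpace ℝ (Fin d) => ‖x‖) atTop) (nhds 0) := by
  have hg_meas : ∀ x : EuclideanSpace ℝ (Fin d),
      Measurable (fun y : EuclideanSpace ℝ (Fin d) => ‖y - x‖⁻¹ • (y - x)) := fun x =>
    ((measurable_id.sub measurable_const).norm.inv).smul (measurable_id.sub measurable_const)
  have hg_bd : ∀ x y : EuclideanSpace ℝ (Fin d), ‖‖y - x‖⁻¹ • (y - x)‖ ≤ 1 := by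
    intro x y
    rw [norm_smul, norm_inv, norm_norm]
    rcases eq_or_ne (y - x) 0 with h | h
    · simp [h]
    · rw [inv_mul_cancel₀ (norm_ne_zero_iff.mpr h)]
  have hg_int : ∀ x, Integrable (fun y => ‖y - x‖⁻¹ • (y - x)) P := fun x =>
    (integrable_const (1 : ℝ)).mono' (hg_meas x).aestronglyMeasurable
      (Filter.Eventually.of_forall fun y => hg_bd x y)
  -- norm of set integrals bounded by the measure of the set
  have hset_bd : ∀ x (s : Set (EuclideanSpace ℝ (Fin d))),
      ‖∫ y in s, ‖y - x‖⁻¹ • (y - x) ∂P‖ ≤ (P s).toReal := by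
    intro x s
    have := norm_integral_le_of_norm_le_const
      (μ := P.restrict s) (C := 1)
      (Filter.Eventually.of_forall fun y => hg_bd x y)
    simpa [Measure.restrict_apply_univ, measureReal_def] using this
  -- the local integral norm in closed form
  have hN : ∀ x, ‖∫ y, ‖y - x‖⁻¹ • (y - x) ∂((P (R x))⁻¹ • P.restrict (R x))‖
      = β⁻¹ * ‖∫ y in R x, ‖y - x‖⁻¹ • (y - x) ∂P‖ := by
    intro x
    rw [integral_smul_measure, norm_smul, ENNReal.toReal_inv, hRβ x,
      Real.norm_eq_abs, abs_of_nonneg (inv_nonneg.mpr hβ0.le)]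
  -- lower bound: β⁻¹ (‖G x‖ - (1 - β)) ≤ N x
  have hcompl : ∀ x, (P (R x)ᶜ).toReal = 1 - β := by
    intro x
    rw [measure_compl (hRmeas x) (measure_ne_top P _),
      ENNReal.toReal_sub_of_le (measure_mono (Set.subset_univ _)) (measure_ne_top P _),
      hRβ x, measure_univ, ENNReal.toReal_one]
  have hlow : ∀ x,
      ‖∫ y, ‖y - x‖⁻¹ • (y - x) ∂P‖ - (1 - β)
        ≤ ‖∫ y in R x, ‖y - x‖⁻¹ • (y - x) ∂P‖ := by
    intro x
    have hsum := integral_add_compl (hRmeas x) (hg_int x)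
    have h1 : ‖∫ y, ‖y - x‖⁻¹ • (y - x) ∂P‖
        ≤ ‖∫ y in R x, ‖y - x‖⁻¹ • (y - x) ∂P‖
          + ‖∫ y in (R x)ᶜ, ‖y - x‖⁻¹ • (y - x) ∂P‖ := by
      rw [← hsum]; exact norm_add_le _ _
    have h2 := hset_bd x (R x)ᶜ
    rw [hcompl x] at h2
    linarith
  -- squeeze
  apply squeeze_zero (g := fun x =>
    β⁻¹ * (1 - ‖∫ y, ‖y - x‖⁻¹ • (y - x) ∂P‖))
  · intro x
    rw [hN x, sub_nonneg]
    have h2 := hset_bd x (R x)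
    rw [hRβ x] at h2
    calc β⁻¹ * ‖∫ y in R x, ‖y - x‖⁻¹ • (y - x) ∂P‖ ≤ β⁻¹ * β := by
          exact mul_le_mul_of_nonneg_left h2 (inv_nonneg.mpr hβ0.le)
      _ = 1 := inv_mul_cancel₀ hβ0.ne'
  · intro x
    rw [hN x]
    have h := hlow x
    have hb := mul_le_mul_of_nonneg_left h (inv_nonneg.mpr hβ0.le)
    have hβinv : β⁻¹ * β = 1 := inv_mul_cancel₀ hβ0.ne'
    nlinarith [inv_nonneg.mpr hβ0.le]
  · have : Tendsto (fun x : EuclideanSpace ℝ (Fin d) =>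
        β⁻¹ * (1 - ‖∫ y, ‖y - x‖⁻¹ • (y - x) ∂P‖))
        (Filter.comap (fun x : EuclideanSpace ℝ (Fin d) => ‖x‖) atTop)
        (nhds (β⁻¹ * (1 - 1))) :=
      (tendsto_const_nhds.sub hglobal).const_mul β⁻¹
    simpa using this
end
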